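/- arXiv:2504.01107 — 2 statements merged into one kernel-verified Lean document; each statement's English description precedes it below -/
import Mathlib

section
/- For permutations π, σ of a finite set of size n, one has π ≤ σ if and only if |π| + |π⁻¹σ| = |σ|, where |τ| = n − #(τ) and #(τ) is the number of cycles of τ (including fixed points). -/
open Equiv

namespace ThirdOrderFree

variable {α : Type*}

/-- The setoid whose classes are the cycles (orbits) of a permutation. -/
def sameCycleSetoid (σ : Perm α) : Setoid α :=
  ⟨σ.SameCycle,
    ⟨fun x => Equiv.Perm.SameCycle.refl σ x, fun h => h.symm, fun h h' => h.trans h'⟩⟩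

/-- Number of cycles (orbits, including fixed points) of a permutation. -/
noncomputable def numCycles (σ : Perm α) : ℕ :=
  Nat.card (Quotient (sameCycleSetoid σ))

/-- The length `|σ| = n - #(σ)`. -/
noncomputable def len (σ : Perm α) : ℕ :=
  Nat.card α - numCycles σ

/-- Join of the cycle partitions of two permutations. -/
def joinSetoid (π σ : Perm α) : Setoid α :=
  sameCycleSetoid π ⊔ sameCycleSetoid σ

/-- Number of blocks of `π ∨ σ`. -/
noncomputable def numBlocks (π σ : Perm α) : ℕ :=
  Nat.card (Quotient (joinSetoid π σ))

/-- `π ∨ σ` is the one-block partition. -/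
def JoinTop (π σ : Perm α) : Prop :=
  ∀ x y : α, (joinSetoid π σ).r x y

/-- `π` is a non-crossing (annular) permutation with respect to `γ`. -/
def SNC (γ π : Perm α) : Prop :=
  JoinTop π γ ∧
    numCycles π + numCycles (π⁻¹ * γ) + numCycles γ = Nat.card α + 2

/-- `τ` separates the points of `N`: no cycle of `τ` contains two distinct points of `N`. -/
def Separates (τ : Perm α) (N : Set α) : Prop :=
  ∀ x ∈ N, ∀ y ∈ N, τ.SameCycle x y → x = y

/-- The first-return map of `σ` on the set `{x | p x}`. -/
noncomputable def firstReturn (σ : Perm α) (p : α → Prop) (x : α) : α :=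
  (σ ^ sInf {k : ℕ | 0 < k ∧ p ((σ ^ k) x)}) x

open Classical in
/-- The restriction of `σ` to `{x | p x}`: the unique permutation agreeing with the
first-return map (it exists whenever `α` is finite). -/
noncomputable def restrictPerm (σ : Perm α) (p : α → Prop) : Perm {x // p x} :=
  if h : ∃ e : Perm {x // p x}, ∀ x : {x // p x}, (e x : α) = firstReturn σ p (x : α)
  then h.choose else 1

/-- `π ≤ σ` : each cycle of `π` is contained in a cycle of `σ` and on each cycle of
`σ` the restriction of `π` is a non-crossing permutation of that cycle. -/
def le' (π σ : Perm α) : Prop :=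
  (∀ x y : α, π.SameCycle x y → σ.SameCycle x y) ∧
  ∀ x : α,
    numCycles (restrictPerm π (σ.SameCycle x)) +
      numCycles ((restrictPerm π (σ.SameCycle x))⁻¹ * restrictPerm σ (σ.SameCycle x)) =
      Nat.card {y // σ.SameCycle x y} + 1

/-- `π ≲ σ` : on each block of `π ∨ σ`, `π` is annular non-crossing w.r.t. `σ`. -/
def ncRel (π σ : Perm α) : Prop :=
  ∀ x : α,
    SNC (restrictPerm σ ((joinSetoid π σ).r x)) (restrictPerm π ((joinSetoid π σ).r x))

/-- The permutation of `Σ i, Fin (n i)` rotating each block: the product of the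
directed cycles `T i` of lengths `n i`. -/
def blockRotate {ι : Type*} (n : ι → ℕ) : Perm ((i : ι) × Fin (n i)) :=
  Equiv.sigmaCongrRight fun i => finRotate (n i)

/-- The first elements of the blocks. -/
def zeroSection {ι : Type*} (n : ι → ℕ) (hn : ∀ i, 0 < n i) :
    ι ≃ {x : (i : ι) × Fin (n i) // x.2.val = 0} where
  toFun i := ⟨⟨i, ⟨0, hn i⟩⟩, rfl⟩
  invFun x := x.1.1
  left_inv i := rfl
  right_inv := fun x => by
    obtain ⟨⟨i, j⟩, hj⟩ := x
    exact Subtype.ext (congrArg (Sigma.mk i) (Fin.ext hj.symm))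

/-- `π_{\vec n}` : merge the blocks `T i` along the cycles of `π`; within a block it
moves forward, and the last element of block `i` is sent to the first element of
block `π i`. -/
def mergePerm {ι : Type*} (n : ι → ℕ) (hn : ∀ i, 0 < n i) (π : Perm ι) :
    Perm ((i : ι) × Fin (n i)) :=
  (π.extendDomain (zeroSection n hn)) * blockRotate n





/-- merge the classes of `a` and `b` in a setoid -/
def mergeSetoid (s : Setoid α) (a b : α) : Setoid α where
  r x y := s.r x y ∨ (s.r x a ∧ s.r b y) ∨ (s.r x b ∧ s.r a y)
  iseqv := by
    constructor
    · exact fun x => Or.inl (s.refl' x)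
    · rintro x y (h | ⟨h1, h2⟩ | ⟨h1, h2⟩)
      · exact Or.inl (s.symm' h)
      · exact Or.inr (Or.inr ⟨s.symm' h2, s.symm' h1⟩)
      · exact Or.inr (Or.inl ⟨s.symm' h2, s.symm' h1⟩)
    · rintro x y z (h | ⟨h1, h2⟩ | ⟨h1, h2⟩) (h' | ⟨h1', h2'⟩ | ⟨h1', h2'⟩)
      · exact Or.inl (s.trans' h h')
      · exact Or.inr (Or.inl ⟨s.trans' h h1', h2'⟩)
      · exact Or.inr (Or.inr ⟨s.trans' h h1', h2'⟩)
      · exact Or.inr (Or.inl ⟨h1, s.trans' h2 h'⟩)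
      · exact Or.inl (s.trans' (s.trans' h1 (s.symm' (s.trans' h2 h1'))) h2')
      · exact Or.inl (s.trans' h1 h2')
      · exact Or.inr (Or.inr ⟨h1, s.trans' h2 h'⟩)
      · exact Or.inl (s.trans' h1 h2')
      · exact Or.inl (s.trans' (s.trans' h1 (s.symm' (s.trans' h2 h1'))) h2')

lemma le_mergeSetoid (s : Setoid α) (a b : α) : s ≤ mergeSetoid s a b :=
  fun _ _ h => Or.inl h

lemma mergeSetoid_le (s : Setoid α) {a b : α} (hab : s.r a b) : mergeSetoid s a b ≤ s := by
  rintro x y (h | ⟨h1, h2⟩ | ⟨h1, h2⟩)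
  · exact h
  · exact s.trans' (s.trans' h1 hab) h2
  · exact s.trans' (s.trans' h1 (s.symm' hab)) h2

lemma mergeSetoid_rel_ab (s : Setoid α) (a b : α) : (mergeSetoid s a b).r a b :=
  Or.inr (Or.inl ⟨s.refl' a, s.refl' b⟩)

/-- if `s` relates every `z` to `f z` then it contains the cycle setoid of `f` -/
lemma sameCycleSetoid_le_of_step [Finite α] (f : Perm α) (s : Setoid α)
    (h : ∀ z, s.r z (f z)) : sameCycleSetoid f ≤ s := by
  have aux : ∀ (i : ℕ) (x : α), s.r x ((f ^ i) x) := by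
    intro i
    induction i with
    | zero => exact fun x => s.refl' x
    | succ n ih =>
      intro x
      have : (f ^ (n + 1)) x = (f ^ n) (f x) := by rw [pow_succ]; rfl
      rw [this]
      exact s.trans' (h x) (ih (f x))
  intro x y hxy
  obtain ⟨i, _, hi⟩ := (hxy : f.SameCycle x y).exists_pow_eq'
  exact hi ▸ aux i x

lemma sameCycle_apply_self (f : Perm α) (z : α) : f.SameCycle z (f z) := ⟨1, by simp⟩

lemma sameCycle_inv_apply_self (f : Perm α) (z : α) : f.SameCycle z (f⁻¹ z) :=
  ⟨-1, by simp⟩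

/-- key step lemma: multiplying by a swap stays within the merged setoid -/
lemma step_merge [Finite α] [DecidableEq α] (ξ : Perm α) (a b : α) (s : Setoid α)
    (hξ : sameCycleSetoid ξ ≤ s) :
    sameCycleSetoid (ξ * swap a b) ≤ mergeSetoid s a b := by
  apply sameCycleSetoid_le_of_step
  intro z
  rcases eq_or_ne z a with rfl | hza
  · refine Or.inr (Or.inl ⟨s.refl' z, ?_⟩)
    have : (ξ * swap z b) z = ξ b := by simp [Perm.mul_apply]
    rw [this]
    exact hξ (sameCycle_apply_self ξ b)
  rcases eq_or_ne z b with rfl | hzb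
  · refine Or.inr (Or.inr ⟨s.refl' z, ?_⟩)
    have : (ξ * swap a z) z = ξ a := by simp [Perm.mul_apply]
    rw [this]
    exact hξ (sameCycle_apply_self ξ a)
  · have : (ξ * swap a b) z = ξ z := by simp [Perm.mul_apply, swap_apply_of_ne_of_ne hza hzb]
    rw [this]
    exact Or.inl (hξ (sameCycle_apply_self ξ z))


section counting
variable [Finite α] {s t : Setoid α}

/-- projection between quotients of comparable setoids. -/
def projQ (h : s ≤ t) : Quotient s → Quotient t :=
  Quotient.lift (fun a => Quotient.mk t a) fun _ _ hab => Quotient.sound (h hab)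

lemma projQ_mk (h : s ≤ t) (a : α) : projQ h (Quotient.mk s a) = Quotient.mk t a := rfl

lemma projQ_surjective (h : s ≤ t) : Function.Surjective (projQ h) := by
  rintro ⟨x⟩
  exact ⟨Quotient.mk s x, rfl⟩

lemma card_quot_le (h : s ≤ t) : Nat.card (Quotient t) ≤ Nat.card (Quotient s) :=
  Nat.card_le_card_of_surjective _ (projQ_surjective h)

lemma le_of_card_quot_eq (h : s ≤ t)
    (hc : Nat.card (Quotient t) = Nat.card (Quotient s)) : t ≤ s := by
  have hbij : Function.Bijective (projQ h) :=
    (Nat.bijective_iff_surjective_and_card _).2 ⟨projQ_surjective h, hc.symm⟩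
  intro x y hxy
  have : Quotient.mk s x = Quotient.mk s y :=
    hbij.1 (by rw [projQ_mk, projQ_mk]; exact Quotient.sound hxy)
  exact Quotient.exact this

open Classical in
lemma card_quot_succ_le (h : s ≤ t) {a b : α} (hab : ¬ s.r a b) (htab : t.r a b) :
    Nat.card (Quotient t) + 1 ≤ Nat.card (Quotient s) := by
  set f : Quotient s → Quotient t := projQ h with hf
  have hsurj := projQ_surjective h
  set sec : Quotient t → Quotient s := Function.surjInv hsurj with hsec
  have hfsec : ∀ c, f (sec c) = c := fun c => Function.surjInv_eq hsurj c
  set g : Quotient t ⊕ Unit → Quotient s := fun u =>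
    match u with
    | Sum.inl c => if c = Quotient.mk t a then Quotient.mk s a else sec c
    | Sum.inr _ => Quotient.mk s b with hg
  have hginj : Function.Injective g := by
    rintro (c | u) (c' | u') hcc
    · simp only [hg] at hcc
      split_ifs at hcc with h1 h2 h2
      · rw [h1, h2]
      · exfalso
        apply h2
        have : f (Quotient.mk s a) = f (sec c') := by rw [hcc]
        rw [hfsec] at this
        rw [← this, hf, projQ_mk]
      · exfalso
        apply h1
        have : f (sec c) = f (Quotient.mk s a) := by rw [hcc]
        rw [hfsec] at this
        rw [this, hf, projQ_mk]
      · have : f (sec c) = f (sec c') := by rw [hcc]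
        rw [hfsec, hfsec] at this
        rw [this]
    · exfalso
      simp only [hg] at hcc
      split_ifs at hcc with h1
      · exact hab (Quotient.exact hcc)
      · apply h1
        have : f (sec c) = f (Quotient.mk s b) := by rw [hcc]
        rw [hfsec, hf, projQ_mk] at this
        rw [this]
        exact (Quotient.sound (t.symm' htab))
    · exfalso
      simp only [hg] at hcc
      split_ifs at hcc with h1
      · exact hab (Quotient.exact hcc.symm)
      · apply h1
        have : f (sec c') = f (Quotient.mk s b) := by rw [hcc]
        rw [hfsec, hf, projQ_mk] at this
        rw [this]
        exact (Quotient.sound (t.symm' htab))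
    · rfl
  have := Nat.card_le_card_of_injective g hginj
  simpa [Nat.card_sum] using this

open Classical in
lemma card_quot_le_succ {a b : α} (hst : t ≤ mergeSetoid s a b) (hts : s ≤ mergeSetoid t a b) :
    Nat.card (Quotient t) ≤ Nat.card (Quotient s) + 1 := by
  have hta : ∀ {x}, t.r x a → (s.r x a ∨ s.r x b) := by
    intro x hx
    rcases hst hx with h | ⟨h1, _⟩ | ⟨h1, _⟩
    · exact Or.inl h
    · exact Or.inl h1
    · exact Or.inr h1
  have hsa : ∀ {x}, s.r x a → (t.r x a ∨ t.r x b) := by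
    intro x hx
    rcases hts hx with h | ⟨h1, _⟩ | ⟨h1, _⟩
    · exact Or.inl h
    · exact Or.inl h1
    · exact Or.inr h1
  have htb : ∀ {x}, t.r x b → (s.r x a ∨ s.r x b) := by
    intro x hx
    rcases hst hx with h | ⟨h1, _⟩ | ⟨h1, _⟩
    · exact Or.inr h
    · exact Or.inl h1
    · exact Or.inr h1
  have hsb : ∀ {x}, s.r x b → (t.r x a ∨ t.r x b) := by
    intro x hx
    rcases hts hx with h | ⟨h1, h2⟩ | ⟨h1, h2⟩
    · exact Or.inr h
    · exact Or.inl h1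
    · exact Or.inr h1
  have hnear : ∀ {x y}, t.r x y → ((s.r x a ∨ s.r x b) ↔ (s.r y a ∨ s.r y b)) := by
    intro x y hxy
    rcases hst hxy with h | ⟨h1, h2⟩ | ⟨h1, h2⟩
    · constructor
      · rintro (h' | h')
        · exact Or.inl (s.trans' (s.symm' h) h')
        · exact Or.inr (s.trans' (s.symm' h) h')
      · rintro (h' | h')
        · exact Or.inl (s.trans' h h')
        · exact Or.inr (s.trans' h h')
    · exact ⟨fun _ => Or.inr (s.symm' h2), fun _ => Or.inl h1⟩
    · exact ⟨fun _ => Or.inl (s.symm' h2), fun _ => Or.inr h1⟩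
  set F : α → ({u : Quotient s // u ≠ Quotient.mk s a} ⊕ Bool) := fun x =>
    if h : s.r x a ∨ s.r x b then Sum.inr (decide (t.r x a))
    else Sum.inl ⟨Quotient.mk s x, fun hc => h (Or.inl (Quotient.exact hc))⟩ with hF
  have hwd : ∀ x y, t.r x y → F x = F y := by
    intro x y hxy
    by_cases hx : s.r x a ∨ s.r x b
    · have hy : s.r y a ∨ s.r y b := (hnear hxy).1 hx
      simp only [hF, dif_pos hx, dif_pos hy]
      congr 1
      exact decide_eq_decide.2 ⟨fun h => t.trans' (t.symm' hxy) h, fun h => t.trans' hxy h⟩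
    · have hy : ¬ (s.r y a ∨ s.r y b) := fun h => hx ((hnear hxy).2 h)
      simp only [hF, dif_neg hx, dif_neg hy]
      rcases hst hxy with h | ⟨h1, _⟩ | ⟨h1, _⟩
      · exact congrArg Sum.inl (Subtype.ext (Quotient.sound h))
      · exact absurd (Or.inl h1) hx
      · exact absurd (Or.inr h1) hx
  set G : Quotient t → ({u : Quotient s // u ≠ Quotient.mk s a} ⊕ Bool) :=
    Quotient.lift F hwd with hG
  have hGinj : Function.Injective G := by
    rintro ⟨x⟩ ⟨y⟩ hxy
    change F x = F y at hxy
    refine Quotient.sound (?_ : t.r x y)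
    by_cases hx : s.r x a ∨ s.r x b <;> by_cases hy : s.r y a ∨ s.r y b
    · simp only [hF, dif_pos hx, dif_pos hy, Sum.inr.injEq, decide_eq_decide] at hxy
      by_cases hxa : t.r x a
      · exact t.trans' hxa (t.symm' (hxy.1 hxa))
      · have hxb : t.r x b := by
          rcases hx with h | h
          · rcases hsa h with h' | h'
            · exact absurd h' hxa
            · exact h'
          · rcases hsb h with h' | h'
            · exact absurd h' hxa
            · exact h'
        have hyb : t.r y b := by
          have hya : ¬ t.r y a := fun h => hxa (hxy.2 h)
          rcases hy with h | h
          · rcases hsa h with h' | h'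
            · exact absurd h' hya
            · exact h'
          · rcases hsb h with h' | h'
            · exact absurd h' hya
            · exact h'
        exact t.trans' hxb (t.symm' hyb)
    · simp [hF, dif_pos hx, dif_neg hy] at hxy
    · simp [hF, dif_neg hx, dif_pos hy] at hxy
    · simp only [hF, dif_neg hx, dif_neg hy, Sum.inl.injEq, Subtype.mk.injEq] at hxy
      have hsxy : s.r x y := Quotient.exact hxy
      rcases hts hsxy with h | ⟨h1, _⟩ | ⟨h1, _⟩
      · exact h
      · exact absurd (hta h1) hx
      · exact absurd (htb h1) hx
  have hcard := Nat.card_le_card_of_injective G hGinj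
  rw [Nat.card_sum] at hcard
  have hsplit : Nat.card (Quotient s) =
      Nat.card {u : Quotient s // u = Quotient.mk s a} +
        Nat.card {u : Quotient s // u ≠ Quotient.mk s a} := by
    rw [← Nat.card_sum]
    exact (Nat.card_congr (Equiv.sumCompl (· = Quotient.mk s a))).symm
  have h1 : Nat.card {u : Quotient s // u = Quotient.mk s a} = 1 := by
    rw [Nat.card_eq_one_iff_unique]
    constructor
    · constructor
      rintro ⟨x, rfl⟩ ⟨y, hy⟩
      exact Subtype.ext hy.symm
    · exact ⟨⟨Quotient.mk s a, rfl⟩⟩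
  have hbool : Nat.card Bool = 2 := by simp [Nat.card_eq_fintype_card]
  omega

end counting


section splitmerge
variable [Finite α] [DecidableEq α]

lemma pow_fixed_mul (f : Perm α) (x : α) (k : ℕ) (hk : (f ^ k) x = x) :
    ∀ m, (f ^ (k * m)) x = x := by
  intro m
  induction m with
  | zero => simp
  | succ n ih =>
    have : k * (n + 1) = k * n + k := by ring
    rw [this, pow_add, Perm.mul_apply, hk, ih]

lemma pow_mod_cycle (f : Perm α) (x : α) (k : ℕ) (hk : (f ^ k) x = x) (i : ℕ) :
    (f ^ i) x = (f ^ (i % k)) x := by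
  conv_lhs => rw [← Nat.mod_add_div i k]
  rw [pow_add, Perm.mul_apply, pow_fixed_mul f x k hk]

lemma traj_eq (ζ : Perm α) {a b : α} (hab : a ≠ b) (k : ℕ)
    (hmin : ∀ j, 0 < j → j < k → (ζ ^ j) b ≠ a ∧ (ζ ^ j) b ≠ b) :
    ∀ j, 1 ≤ j → j ≤ k → ((ζ * swap a b) ^ j) a = (ζ ^ j) b := by
  intro j
  induction j with
  | zero => omega
  | succ n ih =>
    intro _ hnk
    rcases Nat.eq_zero_or_pos n with rfl | hn
    · simp [Perm.mul_apply]
    · have hih := ih hn (by omega)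
      have hne := hmin n hn (by omega)
      calc ((ζ * swap a b) ^ (n + 1)) a
          = (ζ * swap a b) (((ζ * swap a b) ^ n) a) := by rw [pow_succ']; rfl
        _ = ζ (swap a b ((ζ ^ n) b)) := by rw [hih]; rfl
        _ = ζ ((ζ ^ n) b) := by rw [swap_apply_of_ne_of_ne hne.1 hne.2]
        _ = (ζ ^ (n + 1)) b := by rw [pow_succ']; rfl

lemma sameCycle_mul_swap_of_not (ζ : Perm α) {a b : α} (hab : a ≠ b)
    (h : ¬ ζ.SameCycle a b) : (ζ * swap a b).SameCycle a b := by
  -- k := period of b under ζ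
  have hex : ∃ k, 0 < k ∧ (ζ ^ k) b = b := ⟨orderOf ζ, orderOf_pos ζ, by simp [pow_orderOf_eq_one]⟩
  classical
  set S : Set ℕ := {k | 0 < k ∧ (ζ ^ k) b = b} with hS
  have hne : S.Nonempty := ⟨hex.choose, hex.choose_spec⟩
  set k := sInf S with hk
  have hkmem : k ∈ S := Nat.sInf_mem hne
  have hmin : ∀ j, 0 < j → j < k → (ζ ^ j) b ≠ a ∧ (ζ ^ j) b ≠ b := by
    intro j hj hjk
    constructor
    · intro hja
      exact h ⟨-(j : ℤ), by rw [zpow_neg, zpow_natCast, ← hja, ← Perm.mul_apply, inv_mul_cancel, Perm.one_apply]⟩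
    · intro hjb
      exact absurd (Nat.sInf_le (show j ∈ S from ⟨hj, hjb⟩)) (not_le.mpr hjk)
  have := traj_eq ζ hab k hmin k hkmem.1 le_rfl
  exact ⟨(k : ℤ), by rw [zpow_natCast, this, hkmem.2]⟩

lemma not_sameCycle_mul_swap_of (ζ : Perm α) {a b : α} (hab : a ≠ b)
    (h : ζ.SameCycle a b) : ¬ (ζ * swap a b).SameCycle a b := by
  classical
  -- k := first positive time the ζ-orbit of b hits {a, b}; in fact it hits a
  have hex : ∃ k, 0 < k ∧ ((ζ ^ k) b = a ∨ (ζ ^ k) b = b) :=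
    ⟨orderOf ζ, orderOf_pos ζ, Or.inr (by simp [pow_orderOf_eq_one])⟩
  set S : Set ℕ := {k | 0 < k ∧ ((ζ ^ k) b = a ∨ (ζ ^ k) b = b)} with hS
  have hne : S.Nonempty := ⟨hex.choose, hex.choose_spec⟩
  set k := sInf S with hk
  have hkmem : k ∈ S := Nat.sInf_mem hne
  have hmin : ∀ j, 0 < j → j < k → (ζ ^ j) b ≠ a ∧ (ζ ^ j) b ≠ b := by
    intro j hj hjk
    constructor
    · intro hja
      exact absurd (Nat.sInf_le (show j ∈ S from ⟨hj, Or.inl hja⟩)) (not_le.mpr hjk)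
    · intro hjb
      exact absurd (Nat.sInf_le (show j ∈ S from ⟨hj, Or.inr hjb⟩)) (not_le.mpr hjk)
  have hka : (ζ ^ k) b = a := by
    rcases hkmem.2 with h' | h'
    · exact h'
    · -- the orbit of b returns to b before hitting a : contradiction with SameCycle ζ a b
      exfalso
      obtain ⟨i, hi0, _, hib⟩ := (h.symm : ζ.SameCycle b a).exists_pow_eq''
      have hmod := pow_mod_cycle ζ b k h' i
      rw [hib] at hmod
      have hlt : i % k < k := Nat.mod_lt _ hkmem.1
      rcases Nat.eq_zero_or_pos (i % k) with hz | hpos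
      · rw [hz] at hmod; simp at hmod; exact hab hmod
      · exact (hmin _ hpos hlt).1 hmod.symm
  have htraj := traj_eq ζ hab k hmin
  have hfix : ((ζ * swap a b) ^ k) a = a := by
    rw [htraj k hkmem.1 le_rfl, hka]
  intro hcon
  obtain ⟨i, hi0, _, hib⟩ := hcon.exists_pow_eq''
  have hmod := pow_mod_cycle (ζ * swap a b) a k hfix i
  rw [hib] at hmod
  have hlt : i % k < k := Nat.mod_lt _ hkmem.1
  rcases Nat.eq_zero_or_pos (i % k) with hz | hpos
  · rw [hz] at hmod; simp at hmod; exact hab hmod.symm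
  · rw [htraj _ hpos hlt.le] at hmod
    exact (hmin _ hpos hlt).2 hmod.symm

end splitmerge


lemma sameCycleSetoid_inv (f : Perm α) : sameCycleSetoid f⁻¹ = sameCycleSetoid f :=
  Setoid.ext fun _ _ => Perm.sameCycle_inv

lemma numCycles_inv (f : Perm α) : numCycles f⁻¹ = numCycles f := by
  unfold numCycles
  rw [sameCycleSetoid_inv]

lemma numCycles_one : numCycles (1 : Perm α) = Nat.card α := by
  refine (Nat.card_eq_of_bijective (fun x => Quotient.mk (sameCycleSetoid 1) x) ⟨?_, ?_⟩).symm
  · intro x y hxy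
    have := Quotient.exact hxy
    exact Perm.sameCycle_one.mp this
  · rintro ⟨x⟩
    exact ⟨x, rfl⟩

lemma joinSetoid_one (γ : Perm α) : joinSetoid 1 γ = sameCycleSetoid γ := by
  refine le_antisymm (sup_le ?_ le_rfl) le_sup_right
  intro x y hxy
  have : x = y := Perm.sameCycle_one.mp hxy
  exact this ▸ (sameCycleSetoid γ).refl' x

lemma numBlocks_one (γ : Perm α) : numBlocks 1 γ = numCycles γ := by
  unfold numBlocks numCycles
  rw [joinSetoid_one]

lemma sameCycle_mul_le_join [Finite α] (ξ γ : Perm α) :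
    sameCycleSetoid (ξ⁻¹ * γ) ≤ joinSetoid ξ γ := by
  refine sameCycleSetoid_le_of_step _ _ fun z => ?_
  have h1 : (joinSetoid ξ γ).r z (γ z) :=
    (le_sup_right : sameCycleSetoid γ ≤ joinSetoid ξ γ) (sameCycle_apply_self γ z)
  have h2 : (joinSetoid ξ γ).r (γ z) (ξ⁻¹ (γ z)) :=
    (le_sup_left : sameCycleSetoid ξ ≤ joinSetoid ξ γ) (sameCycle_inv_apply_self ξ (γ z))
  exact (joinSetoid ξ γ).trans' h1 h2

lemma join_step [Finite α] [DecidableEq α] (ξ γ : Perm α) (a b : α) :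
    joinSetoid (ξ * swap a b) γ ≤ mergeSetoid (joinSetoid ξ γ) a b :=
  sup_le (step_merge ξ a b _ le_sup_left) (le_trans le_sup_right (le_mergeSetoid _ a b))

lemma propA_aux [Fintype α] [DecidableEq α] : ∀ (N : ℕ) (π γ : Perm α), π.support.card ≤ N →
    numCycles π + numCycles (π⁻¹ * γ) + numCycles γ ≤ Nat.card α + 2 * numBlocks π γ := by
  have base : ∀ γ : Perm α, numCycles (1:Perm α) + numCycles ((1:Perm α)⁻¹ * γ) + numCycles γ ≤
      Nat.card α + 2 * numBlocks 1 γ := by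
    intro γ
    rw [numCycles_one, numBlocks_one, inv_one, one_mul]
    omega
  intro N
  induction N with
  | zero =>
    intro π γ hc
    have : π = 1 := by
      rw [← Perm.support_eq_empty_iff]
      exact Finset.card_eq_zero.mp (Nat.le_zero.mp hc)
    subst this
    exact base γ
  | succ N ih =>
    intro π γ hc
    by_cases hπ1 : π = 1
    · subst hπ1; exact base γ
    · obtain ⟨a, ha⟩ : ∃ a, π a ≠ a := by
        by_contra hcon
        push_neg at hcon
        exact hπ1 (Equiv.ext hcon)
      set b := π a with hb
      have hab : a ≠ b := fun h => ha h.symm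
      set π' := π * swap a b with hπ'
      have hππ' : π' * swap a b = π := by rw [hπ', mul_assoc, swap_mul_self, mul_one]
      have hbfix : π' b = b := by
        rw [hπ', Perm.mul_apply, swap_apply_right, hb]
      have hbmem : b ∈ π.support := by
        rw [Perm.mem_support]
        intro hcon
        exact hab (π.injective (hb ▸ hcon.symm ▸ rfl))
      have hsub : π'.support ⊆ π.support.erase b := by
        intro x hx
        rw [Perm.mem_support] at hx
        rw [Finset.mem_erase, Perm.mem_support]
        constructor
        · rintro rfl; exact hx hbfix
        · intro hcon
          rcases eq_or_ne x a with rfl | hxa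
          · exact ha hcon
          · rcases eq_or_ne x b with rfl | hxb
            · exact hx hbfix
            · apply hx
              rw [hπ', Perm.mul_apply, swap_apply_of_ne_of_ne hxa hxb, hcon]
      have hcard' : π'.support.card ≤ N := by
        have h1 := Finset.card_le_card hsub
        rw [Finset.card_erase_of_mem hbmem] at h1
        omega
      have IH := ih π' γ hcard'
      -- basic facts about π and π'
      have hcycab : (sameCycleSetoid π).r a b := hb ▸ sameCycle_apply_self π a
      have hstep1 : sameCycleSetoid π' ≤ mergeSetoid (sameCycleSetoid π) a b :=
        step_merge π a b _ le_rfl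
      have hstep2 : sameCycleSetoid π ≤ mergeSetoid (sameCycleSetoid π') a b := by
        conv_lhs => rw [← hππ']
        exact step_merge π' a b _ le_rfl
      have hπ'le : sameCycleSetoid π' ≤ sameCycleSetoid π :=
        le_trans hstep1 (mergeSetoid_le _ hcycab)
      have hnotπ' : ¬ (sameCycleSetoid π').r a b :=
        not_sameCycle_mul_swap_of π hab hcycab
      have f1 : numCycles π + 1 ≤ numCycles π' := card_quot_succ_le hπ'le hnotπ' hcycab
      -- the permutations ρ, ζ, η
      set ρ := π⁻¹ * γ with hρ
      set ζ := ρ⁻¹ with hζ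
      set η := ζ * swap a b with hη
      have hηinv : η⁻¹ = π'⁻¹ * γ := by
        rw [hη, hζ, hρ, hπ']
        simp [mul_inv_rev, mul_assoc]
      have hnumη : numCycles (π'⁻¹ * γ) = numCycles η := by rw [← hηinv, numCycles_inv]
      have hnumζ : numCycles ζ = numCycles ρ := by rw [hζ, numCycles_inv]
      have hsetη : sameCycleSetoid (π'⁻¹ * γ) = sameCycleSetoid η := by
        rw [← hηinv, sameCycleSetoid_inv]
      have hstepη1 : sameCycleSetoid η ≤ mergeSetoid (sameCycleSetoid ζ) a b :=
        step_merge ζ a b _ le_rfl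
      have hηζ : η * swap a b = ζ := by rw [hη, mul_assoc, swap_mul_self, mul_one]
      have hstepη2 : sameCycleSetoid ζ ≤ mergeSetoid (sameCycleSetoid η) a b := by
        conv_lhs => rw [← hηζ]
        exact step_merge η a b _ le_rfl
      -- join facts
      have hJ1 : joinSetoid π' γ ≤ mergeSetoid (joinSetoid π γ) a b := join_step π γ a b
      have hJ2 : joinSetoid π γ ≤ mergeSetoid (joinSetoid π' γ) a b := by
        conv_lhs => rw [← hππ']
        exact join_step π' γ a b
      have jf2 : numBlocks π' γ ≤ numBlocks π γ + 1 := card_quot_le_succ hJ1 hJ2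
      by_cases hcase : (sameCycleSetoid ζ).r a b
      · -- split case on the ρ side
        have hnotη : ¬ (sameCycleSetoid η).r a b := not_sameCycle_mul_swap_of ζ hab hcase
        have hηle : sameCycleSetoid η ≤ sameCycleSetoid ζ :=
          le_trans hstepη1 (mergeSetoid_le _ hcase)
        have g1 : numCycles ζ + 1 ≤ numCycles η := card_quot_succ_le hηle hnotη hcase
        rw [hnumη] at IH
        omega
      · -- merge case on the ρ side
        have hηab : (sameCycleSetoid η).r a b := sameCycle_mul_swap_of_not ζ hab hcase
        have g2 : numCycles ρ ≤ numCycles (π'⁻¹ * γ) + 1 := by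
          rw [hnumη, ← hnumζ]
          exact card_quot_le_succ hstepη2 hstepη1
        have hP'ab : (joinSetoid π' γ).r a b := by
          have h1 : sameCycleSetoid (π'⁻¹ * γ) ≤ joinSetoid π' γ := sameCycle_mul_le_join π' γ
          exact h1 (by rw [show sameCycleSetoid (π'⁻¹ * γ) = sameCycleSetoid η from hsetη]; exact hηab)
        have hJP : joinSetoid π γ ≤ joinSetoid π' γ := le_trans hJ2 (mergeSetoid_le _ hP'ab)
        have jg : numBlocks π' γ ≤ numBlocks π γ := card_quot_le hJP
        rw [hnumη] at IH
        omega

lemma propA [Fintype α] [DecidableEq α] (π γ : Perm α) :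
    numCycles π + numCycles (π⁻¹ * γ) + numCycles γ ≤ Nat.card α + 2 * numBlocks π γ :=
  propA_aux π.support.card π γ le_rfl



lemma firstReturn_eq_apply (σ : Perm α) (p : α → Prop) {x : α} (h : p (σ x)) :
    firstReturn σ p x = σ x := by
  unfold firstReturn
  have h1 : 1 ∈ {k : ℕ | 0 < k ∧ p ((σ ^ k) x)} := ⟨one_pos, by simpa using h⟩
  have h2 : sInf {k : ℕ | 0 < k ∧ p ((σ ^ k) x)} = 1 :=
    le_antisymm (Nat.sInf_le h1) (Nat.sInf_mem (⟨1, h1⟩ : Set.Nonempty _)).1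
  rw [h2, pow_one]

lemma restrictPerm_eq_subtypePerm (σ : Perm α) (p : α → Prop) (hp : ∀ x, p x ↔ p (σ x)) :
    restrictPerm σ p = σ.subtypePerm (fun z => (hp z).symm) := by
  unfold restrictPerm
  have hex : ∃ e : Perm {x // p x}, ∀ x : {x // p x}, (e x : α) = firstReturn σ p (x : α) :=
    ⟨σ.subtypePerm (fun z => (hp z).symm), fun x => (firstReturn_eq_apply σ p ((hp x).1 x.2)).symm⟩
  rw [dif_pos hex]
  refine Equiv.ext fun x => Subtype.ext ?_
  rw [hex.choose_spec x, firstReturn_eq_apply σ p ((hp x).1 x.2)]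
  rfl

lemma subtypePerm_sameCycle {σ : Perm α} {p : α → Prop} (hp : ∀ x, p x ↔ p (σ x))
    {x y : {z // p z}} :
    (σ.subtypePerm (fun z => (hp z).symm)).SameCycle x y ↔ σ.SameCycle (x : α) (y : α) := by
  constructor
  · rintro ⟨i, hi⟩
    rw [Perm.subtypePerm_zpow] at hi
    exact ⟨i, congrArg Subtype.val hi⟩
  · rintro ⟨i, hi⟩
    refine ⟨i, ?_⟩
    rw [Perm.subtypePerm_zpow]
    exact Subtype.ext hi

lemma quot_card_eq_one {s : Setoid α} [Nonempty α] (h : ∀ x y, s.r x y) :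
    Nat.card (Quotient s) = 1 := by
  rw [Nat.card_eq_one_iff_unique]
  constructor
  · constructor
    rintro ⟨x⟩ ⟨y⟩
    exact Quotient.sound (h x y)
  · exact ⟨Quotient.mk s Classical.ofNonempty⟩

lemma numCycles_le_card [Finite α] (f : Perm α) : numCycles f ≤ Nat.card α :=
  Nat.card_le_card_of_surjective (Quotient.mk (sameCycleSetoid f)) fun u => by
    obtain ⟨x, rfl⟩ := Quotient.exists_rep u; exact ⟨x, rfl⟩

lemma nat_card_fiber_sum {β γ : Type*} [Finite β] [Fintype γ] (h : β → γ) :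
    Nat.card β = ∑ c : γ, Nat.card {u : β // h u = c} := by
  classical
  have : Fintype β := Fintype.ofFinite β
  rw [← Nat.card_congr (Equiv.sigmaFiberEquiv h), Nat.card_eq_fintype_card, Fintype.card_sigma]
  exact Finset.sum_congr rfl fun c _ => by rw [Nat.card_eq_fintype_card]

lemma card_fiber_eq (f σ : Perm α) (hle : sameCycleSetoid f ≤ sameCycleSetoid σ) (x₀ : α)
    (hp : ∀ z, σ.SameCycle x₀ z ↔ σ.SameCycle x₀ (f z)) :
    Nat.card {u : Quotient (sameCycleSetoid f) //
        projQ hle u = Quotient.mk (sameCycleSetoid σ) x₀}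
      = numCycles (f.subtypePerm (fun z => (hp z).symm)) := by
  have wd : ∀ (z w : {y // σ.SameCycle x₀ y}),
      (f.subtypePerm (fun z => (hp z).symm)).SameCycle z w →
        (⟨Quotient.mk (sameCycleSetoid f) (z : α), Quotient.sound (Setoid.symm' _ z.2)⟩ :
          {u : Quotient (sameCycleSetoid f) //
            projQ hle u = Quotient.mk (sameCycleSetoid σ) x₀}) =
        ⟨Quotient.mk (sameCycleSetoid f) (w : α), Quotient.sound (Setoid.symm' _ w.2)⟩ := by
    intro z w hzw
    exact Subtype.ext (Quotient.sound ((subtypePerm_sameCycle hp).1 hzw))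
  set G : Quotient (sameCycleSetoid (f.subtypePerm (fun z => (hp z).symm))) →
      {u : Quotient (sameCycleSetoid f) // projQ hle u = Quotient.mk (sameCycleSetoid σ) x₀} :=
    Quotient.lift (fun z => ⟨Quotient.mk (sameCycleSetoid f) (z : α),
      Quotient.sound (Setoid.symm' _ z.2)⟩) wd with hG
  have hbij : Function.Bijective G := by
    constructor
    · rintro ⟨z⟩ ⟨w⟩ hzw
      have : Quotient.mk (sameCycleSetoid f) (z : α) = Quotient.mk (sameCycleSetoid f) (w : α) :=
        congrArg Subtype.val hzw
      exact Quotient.sound ((subtypePerm_sameCycle hp).2 (Quotient.exact this))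
    · rintro ⟨u, hu⟩
      obtain ⟨y, rfl⟩ := Quotient.exists_rep u
      have hy : σ.SameCycle x₀ y := Setoid.symm' _ (Quotient.exact hu)
      exact ⟨Quotient.mk _ (⟨y, hy⟩ : {y // σ.SameCycle x₀ y}), Subtype.ext rfl⟩
  exact (Nat.card_eq_of_bijective G hbij).symm



lemma clause2_iff [Fintype α] [DecidableEq α] (π σ : Perm α)
    (hle : sameCycleSetoid π ≤ sameCycleSetoid σ) :
    (numCycles π + numCycles (π⁻¹ * σ) = Nat.card α + numCycles σ) ↔
    (∀ x : α, numCycles (restrictPerm π (σ.SameCycle x)) +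
      numCycles ((restrictPerm π (σ.SameCycle x))⁻¹ * restrictPerm σ (σ.SameCycle x)) =
      Nat.card {y // σ.SameCycle x y} + 1) := by
  classical
  have instQ : Fintype (Quotient (sameCycleSetoid σ)) := Fintype.ofFinite _
  have hρle : sameCycleSetoid (π⁻¹ * σ) ≤ sameCycleSetoid σ := by
    refine sameCycleSetoid_le_of_step _ _ fun z => ?_
    exact (sameCycleSetoid σ).trans' (sameCycle_apply_self σ z)
      (hle (sameCycle_inv_apply_self π (σ z)))
  have hpπ : ∀ x z : α, σ.SameCycle x z ↔ σ.SameCycle x (π z) := fun x z =>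
    ⟨fun h => h.trans (hle (sameCycle_apply_self π z)),
     fun h => h.trans ((hle (sameCycle_apply_self π z)) : σ.SameCycle z (π z)).symm⟩
  have hpσ : ∀ x z : α, σ.SameCycle x z ↔ σ.SameCycle x (σ z) := fun x z =>
    ⟨fun h => h.trans (sameCycle_apply_self σ z),
     fun h => h.trans (sameCycle_apply_self σ z).symm⟩
  have hpρ : ∀ x z : α, σ.SameCycle x z ↔ σ.SameCycle x ((π⁻¹ * σ) z) := fun x z =>
    ⟨fun h => h.trans (hρle (sameCycle_apply_self (π⁻¹ * σ) z)),
     fun h => h.trans ((hρle (sameCycle_apply_self (π⁻¹ * σ) z)) :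
        σ.SameCycle z ((π⁻¹ * σ) z)).symm⟩
  have hrw : ∀ x : α,
      numCycles (restrictPerm π (σ.SameCycle x)) +
        numCycles ((restrictPerm π (σ.SameCycle x))⁻¹ * restrictPerm σ (σ.SameCycle x))
      = numCycles (π.subtypePerm (fun z => (hpπ x z).symm)) + numCycles ((π⁻¹ * σ).subtypePerm (fun z => (hpρ x z).symm)) := by
    intro x
    rw [restrictPerm_eq_subtypePerm π _ (hpπ x), restrictPerm_eq_subtypePerm σ _ (hpσ x)]
    rfl
  set Fπ : Quotient (sameCycleSetoid σ) → ℕ :=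
    fun c => Nat.card {u : Quotient (sameCycleSetoid π) // projQ hle u = c} with hFπdef
  set Fρ : Quotient (sameCycleSetoid σ) → ℕ :=
    fun c => Nat.card {u : Quotient (sameCycleSetoid (π⁻¹ * σ)) // projQ hρle u = c} with hFρdef
  set Fn : Quotient (sameCycleSetoid σ) → ℕ :=
    fun c => Nat.card {y : α // Quotient.mk (sameCycleSetoid σ) y = c} with hFndef
  have hsumπ : numCycles π = ∑ c, Fπ c := nat_card_fiber_sum _
  have hsumρ : numCycles (π⁻¹ * σ) = ∑ c, Fρ c := nat_card_fiber_sum _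
  have hsumn : Nat.card α = ∑ c, Fn c := nat_card_fiber_sum _
  have hsumσ : numCycles σ = ∑ _c : Quotient (sameCycleSetoid σ), 1 := by
    rw [Finset.sum_const, smul_eq_mul, mul_one, Finset.card_univ]
    exact Nat.card_eq_fintype_card
  have hFπx : ∀ x : α, Fπ (Quotient.mk (sameCycleSetoid σ) x) =
      numCycles (π.subtypePerm (fun z => (hpπ x z).symm)) := fun x => card_fiber_eq π σ hle x (hpπ x)
  have hFρx : ∀ x : α, Fρ (Quotient.mk (sameCycleSetoid σ) x) =
      numCycles ((π⁻¹ * σ).subtypePerm (fun z => (hpρ x z).symm)) := fun x =>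
    card_fiber_eq (π⁻¹ * σ) σ hρle x (hpρ x)
  have hFnx : ∀ x : α, Fn (Quotient.mk (sameCycleSetoid σ) x) =
      Nat.card {y // σ.SameCycle x y} := fun x =>
    Nat.card_congr (Equiv.subtypeEquivRight fun y =>
      ⟨fun h => Setoid.symm' (sameCycleSetoid σ) (Quotient.exact h),
       fun h => Quotient.sound (Setoid.symm' (sameCycleSetoid σ) h)⟩)
  have hkey : ∀ c, Fπ c + Fρ c ≤ Fn c + 1 := by
    intro c
    obtain ⟨x, rfl⟩ := Quotient.exists_rep c
    rw [hFπx x, hFρx x, hFnx x]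
    have hA := propA (π.subtypePerm (fun z => (hpπ x z).symm)) (σ.subtypePerm (fun z => (hpσ x z).symm))
    have hmul : (π.subtypePerm (fun z => (hpπ x z).symm))⁻¹ * (σ.subtypePerm (fun z => (hpσ x z).symm)) =
        (π⁻¹ * σ).subtypePerm (fun z => (hpρ x z).symm) := rfl
    rw [hmul] at hA
    have hσ1 : numCycles (σ.subtypePerm (fun z => (hpσ x z).symm)) = 1 := by
      have hne : Nonempty {y // σ.SameCycle x y} := ⟨⟨x, Perm.SameCycle.refl σ x⟩⟩
      refine quot_card_eq_one fun u v => ?_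
      exact (subtypePerm_sameCycle (hpσ x)).2 ((u.2).symm.trans v.2)
    have hB1 : numBlocks (π.subtypePerm (fun z => (hpπ x z).symm)) (σ.subtypePerm (fun z => (hpσ x z).symm)) ≤ 1 := by
      have h := card_quot_le (le_sup_right :
        sameCycleSetoid (σ.subtypePerm (fun z => (hpσ x z).symm)) ≤
          joinSetoid (π.subtypePerm (fun z => (hpπ x z).symm)) (σ.subtypePerm (fun z => (hpσ x z).symm)))
      calc numBlocks (π.subtypePerm (fun z => (hpπ x z).symm)) (σ.subtypePerm (fun z => (hpσ x z).symm))
          ≤ numCycles (σ.subtypePerm (fun z => (hpσ x z).symm)) := h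
        _ = 1 := hσ1
    omega
  constructor
  · intro heq
    have hsum : ∑ c, (Fπ c + Fρ c) = ∑ c, (Fn c + 1) := by
      rw [Finset.sum_add_distrib, Finset.sum_add_distrib, ← hsumπ, ← hsumρ, ← hsumn, ← hsumσ]
      omega
    have hpt := (Finset.sum_eq_sum_iff_of_le fun c _ => hkey c).1 hsum
    intro x
    have h := hpt (Quotient.mk (sameCycleSetoid σ) x) (Finset.mem_univ _)
    rw [hFπx x, hFρx x, hFnx x] at h
    rw [hrw x]
    exact h
  · intro h2
    have hsum : ∑ c, (Fπ c + Fρ c) = ∑ c, (Fn c + 1) := by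
      refine Finset.sum_congr rfl fun c _ => ?_
      obtain ⟨x, rfl⟩ := Quotient.exists_rep c
      rw [hFπx x, hFρx x, hFnx x]
      have h := h2 x
      rw [hrw x] at h
      exact h
    rw [Finset.sum_add_distrib, Finset.sum_add_distrib, ← hsumπ, ← hsumρ, ← hsumn, ← hsumσ]
      at hsum
    omega

lemma main_iff [Fintype α] [DecidableEq α] (π σ : Perm α) :
    le' π σ ↔ numCycles π + numCycles (π⁻¹ * σ) = Nat.card α + numCycles σ := by
  constructor
  · rintro ⟨h1, h2⟩
    have hle : sameCycleSetoid π ≤ sameCycleSetoid σ := fun x y hxy => h1 x y hxy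
    exact (clause2_iff π σ hle).2 h2
  · intro heq
    have hA := propA π σ
    have hB : numBlocks π σ ≤ numCycles σ := card_quot_le le_sup_right
    have hB2 : numCycles σ ≤ numBlocks π σ := by omega
    have hjle : joinSetoid π σ ≤ sameCycleSetoid σ :=
      le_of_card_quot_eq le_sup_right (le_antisymm hB hB2)
    have hle : sameCycleSetoid π ≤ sameCycleSetoid σ := le_trans le_sup_left hjle
    exact ⟨fun x y hxy => hle hxy, (clause2_iff π σ hle).1 heq⟩


/-- `π ≤ σ` iff `|π| + |π⁻¹σ| = |σ|`. -/
theorem stmt1 {n : ℕ} (π σ : Equiv.Perm (Fin n)) :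
    le' π σ ↔ len π + len (π⁻¹ * σ) = len σ := by
  classical
  have hn : Nat.card (Fin n) = n := by simp
  have h1 := numCycles_le_card π
  have h2 := numCycles_le_card (π⁻¹ * σ)
  have h3 := numCycles_le_card σ
  rw [hn] at h1 h2 h3
  rw [main_iff π σ]
  unfold len
  rw [hn]
  constructor <;> intro h <;> omega


end ThirdOrderFree
end

section
/- Let π, σ ∈ S_n be such that π ≲ σ, meaning that for each block B of the join partition π ∨ σ (the finest partition whose blocks are unions of cycles of π and of σ that is coarser than both cycle partitions), the restriction π|_B is non-crossing with respect to σ|_B. Then |σ| + 2(#(σ) − #(π ∨ σ)) = |π| + |π⁻¹σ|. -/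
open Equiv

namespace ThirdOrderFree

variable {α : Type*}

section Aux

variable {β : Type*}

lemma aux_r_zpow (f : Perm β) (J : Setoid β) (hf : ∀ z, J.r z (f z)) :
    ∀ (k : ℤ) (x : β), J.r x ((f ^ k) x) := by
  intro k
  induction k using Int.induction_on with
  | zero => intro x; simpa using J.iseqv.refl x
  | succ k ih =>
      intro x
      have h1 : (f ^ ((k : ℤ) + 1)) x = (f ^ (k : ℤ)) (f x) := by
        rw [zpow_add_one]; rfl
      rw [h1]
      exact J.iseqv.trans (hf x) (ih (f x))
  | pred k ih =>
      intro x
      have h1 : (f ^ (-(k : ℤ) - 1)) x = (f ^ (-(k : ℤ))) (f⁻¹ x) := by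
        rw [zpow_sub_one]; rfl
      rw [h1]
      have h2 : J.r x (f⁻¹ x) := J.iseqv.symm (by simpa using hf (f⁻¹ x))
      exact J.iseqv.trans h2 (ih (f⁻¹ x))

lemma aux_sameCycle_imp (f : Perm β) (J : Setoid β) (hf : ∀ z, J.r z (f z)) {x y : β}
    (h : f.SameCycle x y) : J.r x y := by
  obtain ⟨k, rfl⟩ := h
  exact aux_r_zpow f J hf k x

lemma aux_block_inv (f : Perm β) (J : Setoid β) (hf : ∀ z, J.r z (f z)) (x : β) :
    ∀ y, J.r x (f y) ↔ J.r x y :=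
  fun y => ⟨fun h => J.iseqv.trans h (J.iseqv.symm (hf y)), fun h => J.iseqv.trans h (hf y)⟩

lemma restrictPerm_eq (σ : Perm β) (p : β → Prop) (hp : ∀ x, p (σ x) ↔ p x) :
    restrictPerm σ p = σ.subtypePerm hp := by
  have hfr : ∀ x : {x // p x}, firstReturn σ p (x : β) = σ (x : β) := by
    rintro ⟨x, hx⟩
    have h1 : (1 : ℕ) ∈ {k : ℕ | 0 < k ∧ p ((σ ^ k) x)} :=
      ⟨one_pos, by simpa using (hp x).2 hx⟩
    have h2 : sInf {k : ℕ | 0 < k ∧ p ((σ ^ k) x)} = 1 := by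
      have hle := Nat.sInf_le h1
      have hpos : 0 < sInf {k : ℕ | 0 < k ∧ p ((σ ^ k) x)} :=
        (Nat.sInf_mem ⟨1, h1⟩).1
      omega
    simp [firstReturn, h2]
  have hex : ∃ e : Perm {x // p x}, ∀ x : {x // p x}, (e x : β) = firstReturn σ p (x : β) :=
    ⟨σ.subtypePerm hp, fun x => (hfr x).symm⟩
  refine Equiv.ext fun x => Subtype.ext ?_
  show ((restrictPerm σ p) x : β) = σ (x : β)
  simp only [restrictPerm]
  rw [dif_pos hex, hex.choose_spec x, hfr]

lemma aux_sameCycle_subtypePerm (σ : Perm β) (p : β → Prop) (hp : ∀ x, p (σ x) ↔ p x)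
    (x y : {x // p x}) :
    (σ.subtypePerm hp).SameCycle x y ↔ σ.SameCycle (x : β) (y : β) := by
  constructor
  · rintro ⟨k, hk⟩
    refine ⟨k, ?_⟩
    rw [← hk]
    simp [Equiv.Perm.subtypePerm_zpow, Equiv.Perm.subtypePerm_apply]
  · rintro ⟨k, hk⟩
    refine ⟨k, Subtype.ext ?_⟩
    simp [Equiv.Perm.subtypePerm_zpow, Equiv.Perm.subtypePerm_apply, hk]

lemma aux_nat_card_sigma {ι : Type*} [Fintype ι] (F : ι → Type*) [∀ i, Finite (F i)] :
    Nat.card ((i : ι) × F i) = ∑ i, Nat.card (F i) := by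
  letI : ∀ i, Fintype (F i) := fun i => Fintype.ofFinite _
  simp [Nat.card_eq_fintype_card, Fintype.card_sigma]

lemma aux_numCycles_eq_sum [Finite β] (f : Perm β) (J : Setoid β)
    (hf : ∀ z, J.r z (f z)) [Fintype (Quotient J)] :
    numCycles f =
      ∑ b : Quotient J,
        numCycles (f.subtypePerm (aux_block_inv f J hf (Quotient.out b))) := by
  classical
  have key :
      Quotient (sameCycleSetoid f) ≃
        (b : Quotient J) ×
          Quotient (sameCycleSetoid (f.subtypePerm (aux_block_inv f J hf (Quotient.out b)))) := by
    refine (Equiv.ofBijective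
      (fun s : (b : Quotient J) ×
          Quotient (sameCycleSetoid (f.subtypePerm (aux_block_inv f J hf (Quotient.out b)))) =>
        Quotient.liftOn s.2 (fun u => Quotient.mk (sameCycleSetoid f) (u : β))
          (fun u v huv =>
            Quotient.sound ((aux_sameCycle_subtypePerm f _ _ u v).1 huv)))
      ⟨?_, ?_⟩).symm
    · rintro ⟨b, c⟩ ⟨b', c'⟩ hcc
      induction c using Quotient.inductionOn with | h u => ?_
      induction c' using Quotient.inductionOn with | h v => ?_
      have hsc : f.SameCycle (u : β) (v : β) := Quotient.exact hcc
      have hbb : b = b' := by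
        have h1 : J.r (Quotient.out b) (u : β) := u.2
        have h2 : J.r (Quotient.out b') (v : β) := v.2
        have h3 : J.r (Quotient.out b) (Quotient.out b') :=
          J.iseqv.trans (J.iseqv.trans h1 (aux_sameCycle_imp f J hf hsc)) (J.iseqv.symm h2)
        rw [← Quotient.out_eq b, ← Quotient.out_eq b']
        exact Quotient.sound h3
      subst hbb
      exact congrArg (Sigma.mk b) (Quotient.sound
        ((aux_sameCycle_subtypePerm f _ _ u v).2 hsc))
    · intro q
      induction q using Quotient.inductionOn with | h y => ?_
      have hy : J.r (Quotient.out (Quotient.mk J y)) y :=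
        Quotient.exact (Quotient.out_eq (Quotient.mk J y))
      exact ⟨⟨Quotient.mk J y, Quotient.mk _ ⟨y, hy⟩⟩, rfl⟩
  rw [numCycles, Nat.card_congr key, aux_nat_card_sigma]
  rfl

lemma aux_card_eq_sum [Finite β] (J : Setoid β) [Fintype (Quotient J)] :
    Nat.card β = ∑ b : Quotient J, Nat.card {y // J.r (Quotient.out b) y} := by
  classical
  have key : β ≃ (b : Quotient J) × {y // J.r (Quotient.out b) y} := by
    refine (Equiv.ofBijective
      (fun s : (b : Quotient J) × {y // J.r (Quotient.out b) y} => (s.2 : β)) ⟨?_, ?_⟩).symm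
    · rintro ⟨b, u⟩ ⟨b', v⟩ (huv : (u : β) = (v : β))
      have hbb : b = b' := by
        have h3 : J.r (Quotient.out b) (Quotient.out b') :=
          J.iseqv.trans (huv ▸ u.2) (J.iseqv.symm v.2)
        rw [← Quotient.out_eq b, ← Quotient.out_eq b']
        exact Quotient.sound h3
      subst hbb
      exact congrArg _ (Subtype.ext huv)
    · intro y
      have hy : J.r (Quotient.out (Quotient.mk J y)) y :=
        Quotient.exact (Quotient.out_eq (Quotient.mk J y))
      exact ⟨⟨Quotient.mk J y, ⟨y, hy⟩⟩, rfl⟩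
  rw [Nat.card_congr key, aux_nat_card_sigma]

lemma aux_numCycles_le [Finite β] (f : Perm β) : numCycles f ≤ Nat.card β :=
  Nat.card_le_card_of_surjective (Quotient.mk (sameCycleSetoid f)) Quotient.mk_surjective

end Aux

/-- if `π ≲ σ` then `|σ| + 2(#(σ) − #(π ∨ σ)) = |π| + |π⁻¹σ|`. -/
theorem stmt4 {n : ℕ} (π σ : Equiv.Perm (Fin n)) (h : ncRel π σ) :
    len σ + 2 * (numCycles σ - numBlocks π σ) = len π + len (π⁻¹ * σ) := by
  classical
  set J : Setoid (Fin n) := joinSetoid π σ with hJ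
  letI : Fintype (Quotient J) := Fintype.ofFinite _
  have hπle : ∀ {x y}, π.SameCycle x y → J.r x y := fun hxy =>
    Setoid.le_def.mp (le_sup_left : sameCycleSetoid π ≤ J) hxy
  have hσle : ∀ {x y}, σ.SameCycle x y → J.r x y := fun hxy =>
    Setoid.le_def.mp (le_sup_right : sameCycleSetoid σ ≤ J) hxy
  have hπr : ∀ z, J.r z (π z) := fun z => hπle ⟨1, by simp⟩
  have hσr : ∀ z, J.r z (σ z) := fun z => hσle ⟨1, by simp⟩
  have hτr : ∀ z, J.r z ((π⁻¹ * σ) z) := fun z => by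
    have h2 : J.r (σ z) (π⁻¹ (σ z)) :=
      J.iseqv.symm (by simpa using hπr (π⁻¹ (σ z)))
    exact J.iseqv.trans (hσr z) h2
  have hblock : ∀ b : Quotient J,
      numCycles (π.subtypePerm (aux_block_inv π J hπr (Quotient.out b))) +
        numCycles ((π⁻¹ * σ).subtypePerm (aux_block_inv (π⁻¹ * σ) J hτr (Quotient.out b))) +
        numCycles (σ.subtypePerm (aux_block_inv σ J hσr (Quotient.out b))) =
      Nat.card {y // J.r (Quotient.out b) y} + 2 := by
    intro b
    have hs := (h (Quotient.out b)).2
    have eπ : restrictPerm π ((joinSetoid π σ).r (Quotient.out b)) =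
        π.subtypePerm (aux_block_inv π J hπr (Quotient.out b)) :=
      restrictPerm_eq _ _ _
    have eσ : restrictPerm σ ((joinSetoid π σ).r (Quotient.out b)) =
        σ.subtypePerm (aux_block_inv σ J hσr (Quotient.out b)) :=
      restrictPerm_eq _ _ _
    rw [eπ, eσ] at hs
    have emul : (π.subtypePerm (aux_block_inv π J hπr (Quotient.out b)))⁻¹ *
        σ.subtypePerm (aux_block_inv σ J hσr (Quotient.out b)) =
        (π⁻¹ * σ).subtypePerm (aux_block_inv (π⁻¹ * σ) J hτr (Quotient.out b)) :=
      Equiv.ext fun y => rfl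
    rw [emul] at hs
    omega
  have Hπ := aux_numCycles_eq_sum π J hπr
  have Hσ := aux_numCycles_eq_sum σ J hσr
  have Hτ := aux_numCycles_eq_sum (π⁻¹ * σ) J hτr
  have HN := aux_card_eq_sum (β := Fin n) J
  have hK : numBlocks π σ = Fintype.card (Quotient J) := Nat.card_eq_fintype_card
  have sum_eq : numCycles π + numCycles (π⁻¹ * σ) + numCycles σ =
      Nat.card (Fin n) + 2 * numBlocks π σ := by
    rw [Hπ, Hσ, Hτ, HN, ← Finset.sum_add_distrib, ← Finset.sum_add_distrib,
      Finset.sum_congr rfl (fun b _ => hblock b), Finset.sum_add_distrib,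
      Finset.sum_const, Finset.card_univ, hK, smul_eq_mul]
    ring
  have i1 : numCycles π ≤ Nat.card (Fin n) := aux_numCycles_le π
  have i2 : numCycles σ ≤ Nat.card (Fin n) := aux_numCycles_le σ
  have i3 : numCycles (π⁻¹ * σ) ≤ Nat.card (Fin n) := aux_numCycles_le (π⁻¹ * σ)
  have i4 : numBlocks π σ ≤ numCycles σ := by
    refine Nat.card_le_card_of_surjective
      (Quotient.lift (Quotient.mk J) (fun a b hab => Quotient.sound (hσle hab))) ?_
    intro q
    induction q using Quotient.inductionOn with | h y => ?_
    exact ⟨Quotient.mk _ y, rfl⟩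
  simp only [len]
  omega

end ThirdOrderFree
end
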